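/- arXiv:1708.08775 — 2 statements merged into one kernel-verified Lean document; each statement's English description precedes it below -/
import Mathlib

section
/- For n ≥ 3, the family {ε_S = ε̄₀∏_{i∈S}ε̄ᵢ : S ⊆ {1,...,n}} is not exchangeable; specifically, the subset {ε̄₀, ε̄₀ε̄₁ε̄₂, ε̄₀ε̄₁ε̄₃, ε̄₀ε̄₂ε̄₃} is not mutually independent (the product of the first three equals the fourth), while {ε̄₀, ε̄₀ε̄₁, ε̄₀ε̄₂, ε̄₀ε̄₃} is mutually independent. Hence the law of (ε_S)_S differs from the exchangeable law P, showing the equality case in C(2^n,p,2) = N^{1/2−1/p} is not unique in law without exchangeability. -/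
open MeasureTheory ENNReal

noncomputable section

/-- A family `ε` of ±1-valued (Rademacher) random variables which is `k`-wise independent:
every collection of at most `k` coordinates takes any prescribed pattern of signs with
probability `(1/2)^(number of coordinates)`. -/
def IsKWiseRademacher {Ω : Type*} [MeasurableSpace Ω] (μ : Measure Ω)
    {ι : Type*} [DecidableEq ι] (k : ℕ) (ε : ι → Ω → ℝ) : Prop :=
  (∀ i, Measurable (ε i)) ∧
  ∀ s : Finset ι, s.card ≤ k → ∀ σ : ι → ℝ, (∀ i, σ i = 1 ∨ σ i = -1) →
    μ {ω | ∀ i ∈ s, ε i ω = σ i} = (2 : ℝ≥0∞)⁻¹ ^ s.card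

/-- `PA N`: uniform measure on the two constant sign vectors `(1,…,1)` and `(−1,…,−1)`. -/
def PA (N : ℕ) : Measure (Fin N → ℝ) :=
  (2 : ℝ≥0∞)⁻¹ • (Measure.dirac (fun _ => 1) + Measure.dirac (fun _ => -1))

/-- `PB N`: uniform measure on the sign vectors with exactly `N/2` coordinates equal to `1`. -/
def PB (N : ℕ) : Measure (Fin N → ℝ) :=
  ((N.choose (N / 2) : ℝ≥0∞))⁻¹ •
    ∑ T ∈ Finset.univ.filter (fun T : Finset (Fin N) => T.card = N / 2),
      Measure.dirac (fun i => if i ∈ T then (1 : ℝ) else -1)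

/-- The measure `P = (1/N) P_a + ((N-1)/N) P_b` on `{−1,1}^N`. -/
def PMeas (N : ℕ) : Measure (Fin N → ℝ) :=
  (N : ℝ≥0∞)⁻¹ • PA N + (((N : ℝ≥0∞) - 1) / N) • PB N

/-! ### Auxiliary machinery -/

/-- Encoding of a sign by a Boolean. -/
def toR (t : Bool) : ℝ := if t then 1 else -1

lemma toR_mem (t : Bool) : toR t = 1 ∨ toR t = -1 := by cases t <;> simp [toR]

lemma toR_inj {x y : Bool} : toR x = toR y ↔ x = y := by
  cases x <;> cases y <;> norm_num [toR]

lemma toR_mul (x y : Bool) : toR x * toR y = toR (x == y) := by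
  cases x <;> cases y <;> norm_num [toR]

lemma toR_eq_one {x : Bool} : toR x = 1 ↔ x = true := by cases x <;> norm_num [toR]

lemma toR_eq_neg_one {x : Bool} : toR x = -1 ↔ x = false := by cases x <;> norm_num [toR]

/-- The basic counting fact behind 4-wise independence of the family
`ε₀, ε₀ε₁, ε₀ε₂, ε₀ε₃`. -/
lemma countLemma : ∀ s : Finset (Fin 4), ∀ t : Fin 4 → Bool,
    (Finset.univ.filter (fun v : Fin 4 → Bool =>
      ∀ i ∈ s, (if i = 0 then v 0 else (v 0 == v i)) = t i)).card
      = 2 ^ (4 - s.card) := by decide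

/-- If the four atoms determined by `a,b,c,d` each have probability `1/16`, then the
probability of any event determined by the signs of `a,b,c,d` is the number of sign
patterns satisfying it, divided by `16`. -/
lemma core {Ω : Type*} [MeasurableSpace Ω] (μ : Measure Ω) [IsProbabilityMeasure μ]
    (a b c d : Ω → ℝ) (ha : Measurable a) (hb : Measurable b) (hc : Measurable c)
    (hd : Measurable d)
    (hatom : ∀ v : Fin 4 → Bool,
      μ {ω | a ω = toR (v 0) ∧ b ω = toR (v 1) ∧ c ω = toR (v 2) ∧ d ω = toR (v 3)}
        = (2 : ℝ≥0∞)⁻¹ ^ 4)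
    (E : Set Ω) (p : (Fin 4 → Bool) → Bool)
    (hE : ∀ v : Fin 4 → Bool, ∀ ω, a ω = toR (v 0) → b ω = toR (v 1) → c ω = toR (v 2) →
      d ω = toR (v 3) → (ω ∈ E ↔ p v = true)) :
    μ E = ((Finset.univ.filter fun v : Fin 4 → Bool => p v = true).card : ℝ≥0∞)
      * (2 : ℝ≥0∞)⁻¹ ^ 4 := by
  classical
  set A : (Fin 4 → Bool) → Set Ω := fun v =>
    {ω | a ω = toR (v 0) ∧ b ω = toR (v 1) ∧ c ω = toR (v 2) ∧ d ω = toR (v 3)} with hA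
  have hAm : ∀ v, MeasurableSet (A v) := by
    intro v
    have : A v = a ⁻¹' {toR (v 0)} ∩ (b ⁻¹' {toR (v 1)} ∩ (c ⁻¹' {toR (v 2)} ∩ d ⁻¹' {toR (v 3)})) := by
      ext ω; simp [hA, and_assoc]
    rw [this]
    exact (ha (measurableSet_singleton _)).inter ((hb (measurableSet_singleton _)).inter
      ((hc (measurableSet_singleton _)).inter (hd (measurableSet_singleton _))))
  have hdisj : ∀ v w : Fin 4 → Bool, v ≠ w → Disjoint (A v) (A w) := by
    intro v w hvw
    rw [Set.disjoint_left]
    rintro ω ⟨h0, h1, h2, h3⟩ ⟨g0, g1, g2, g3⟩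
    apply hvw
    funext i
    fin_cases i
    · exact toR_inj.1 (h0 ▸ g0 ▸ rfl)
    · exact toR_inj.1 (h1 ▸ g1 ▸ rfl)
    · exact toR_inj.1 (h2 ▸ g2 ▸ rfl)
    · exact toR_inj.1 (h3 ▸ g3 ▸ rfl)
  set G : Set Ω := ⋃ v ∈ (Finset.univ : Finset (Fin 4 → Bool)), A v with hGdef
  have hGm : MeasurableSet G := by
    apply Finset.measurableSet_biUnion
    exact fun v _ => hAm v
  have hG1 : μ G = 1 := by
    rw [hGdef, measure_biUnion_finset ?hd (fun v _ => hAm v)]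
    · simp only [hA, hatom, Finset.sum_const]
      have : (Finset.univ : Finset (Fin 4 → Bool)).card = 16 := by decide
      rw [this, nsmul_eq_mul, show (((16:ℕ)):ℝ≥0∞) = (2:ℝ≥0∞)^4 by norm_num,
        ← ENNReal.inv_pow]
      exact ENNReal.mul_inv_cancel (by norm_num) (by norm_num)
    case hd =>
      intro v _ w _ hvw
      exact hdisj v w hvw
  have hGc : μ Gᶜ = 0 := by
    rw [measure_compl hGm (measure_ne_top _ _), hG1, measure_univ]
    simp
  have hsplit : μ E = μ (E ∩ G) := by
    refine le_antisymm ?_ (measure_mono Set.inter_subset_left)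
    calc μ E = μ (E ∩ G) + μ (E \ G) := (measure_inter_add_diff E hGm).symm
    _ ≤ μ (E ∩ G) + μ Gᶜ := by
        have hsub : E \ G ⊆ Gᶜ := fun ω hω => hω.2
        exact add_le_add le_rfl (measure_mono hsub)
    _ = μ (E ∩ G) := by rw [hGc, add_zero]
  have hEG : E ∩ G = ⋃ v ∈ Finset.univ.filter (fun v : Fin 4 → Bool => p v = true), A v := by
    ext ω
    constructor
    · rintro ⟨hωE, hωG⟩
      simp only [hGdef, Set.mem_iUnion, exists_prop] at hωG
      obtain ⟨v, -, hv⟩ := hωG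
      simp only [hA, Set.mem_setOf_eq] at hv
      simp only [Set.mem_iUnion, exists_prop, Finset.mem_filter, Finset.mem_univ, true_and]
      exact ⟨v, (hE v ω hv.1 hv.2.1 hv.2.2.1 hv.2.2.2).1 hωE, hv⟩
    · intro hω
      simp only [Set.mem_iUnion, exists_prop, Finset.mem_filter, Finset.mem_univ, true_and] at hω
      obtain ⟨v, hpv, hv⟩ := hω
      have hv' := hv
      simp only [hA, Set.mem_setOf_eq] at hv'
      refine ⟨(hE v ω hv'.1 hv'.2.1 hv'.2.2.1 hv'.2.2.2).2 hpv, ?_⟩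
      simp only [hGdef, Set.mem_iUnion, exists_prop]
      exact ⟨v, Finset.mem_univ v, hv⟩
  rw [hsplit, hEG, measure_biUnion_finset (fun v _ w _ hvw => hdisj v w hvw) (fun v _ => hAm v)]
  simp only [hA, hatom, Finset.sum_const, nsmul_eq_mul]

lemma arithLemma {k : ℕ} (hk : k ≤ 4) :
    ((2:ℝ≥0∞) ^ (4 - k)) * (2:ℝ≥0∞)⁻¹ ^ 4 = (2:ℝ≥0∞)⁻¹ ^ k := by
  have : (2:ℝ≥0∞)⁻¹ ^ 4 = 2⁻¹ ^ (4 - k) * 2⁻¹ ^ k := by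
    rw [← pow_add]; congr 1; omega
  rw [this, ← mul_assoc, ← mul_pow, ENNReal.mul_inv_cancel (by norm_num) (by norm_num),
    one_pow, one_mul]

/-- for `n ≥ 3` the family `ε_S = ε̄₀ ∏_{i∈S} ε̄ᵢ` is not exchangeable:
the quadruple `{ε̄₀, ε̄₀ε̄₁ε̄₂, ε̄₀ε̄₁ε̄₃, ε̄₀ε̄₂ε̄₃}` is not mutually independent while
`{ε̄₀, ε̄₀ε̄₁, ε̄₀ε̄₂, ε̄₀ε̄₃}` is; hence the law of `(ε_S)_S` differs from the exchangeable
optimal law `P`, so the equality case is not unique in law without exchangeability. -/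
theorem product_family_not_exchangeable {Ω : Type*} [MeasurableSpace Ω]
    (μ : Measure Ω) [IsProbabilityMeasure μ] {n : ℕ} (hn : 3 ≤ n)
    (εbar : Fin (n + 1) → Ω → ℝ) (h : IsKWiseRademacher μ (n + 1) εbar)
    (f : Finset (Fin n) → Ω → ℝ)
    (hf : ∀ S ω, f S ω = εbar 0 ω * ∏ i ∈ S, εbar i.succ ω)
    (e : Finset (Fin n) ≃ Fin (2 ^ n)) :
    ¬ IsKWiseRademacher μ 4
        ![εbar 0, fun ω => εbar 0 ω * εbar 1 ω * εbar 2 ω,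
          fun ω => εbar 0 ω * εbar 1 ω * εbar 3 ω,
          fun ω => εbar 0 ω * εbar 2 ω * εbar 3 ω] ∧
    (∀ᵐ ω ∂μ, εbar 0 ω * (εbar 0 ω * εbar 1 ω * εbar 2 ω) * (εbar 0 ω * εbar 1 ω * εbar 3 ω)
        = εbar 0 ω * εbar 2 ω * εbar 3 ω) ∧
    IsKWiseRademacher μ 4
        ![εbar 0, fun ω => εbar 0 ω * εbar 1 ω,
          fun ω => εbar 0 ω * εbar 2 ω, fun ω => εbar 0 ω * εbar 3 ω] ∧
    ¬ (∀ σ : Equiv.Perm (Finset (Fin n)),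
        μ.map (fun ω => fun S => f (σ S) ω) = μ.map (fun ω => fun S => f S ω)) ∧
    μ.map (fun ω => fun j : Fin (2 ^ n) => f (e.symm j) ω) ≠ PMeas (2 ^ n) := by
  classical
  obtain ⟨hmeas, hprob⟩ := h
  haveI : NeZero n := ⟨by omega⟩
  -- values of the small literals of `Fin (n+1)`
  have val0 : ((0 : Fin (n+1)) : ℕ) = 0 := rfl
  have val1 : ((1 : Fin (n+1)) : ℕ) = 1 := by
    have : ((1 : Fin (n+1)) : ℕ) = 1 % (n+1) := rfl
    rw [this, Nat.mod_eq_of_lt (by omega)]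
  have val2 : ((2 : Fin (n+1)) : ℕ) = 2 := by
    have : ((2 : Fin (n+1)) : ℕ) = 2 % (n+1) := rfl
    rw [this, Nat.mod_eq_of_lt (by omega)]
  have val3 : ((3 : Fin (n+1)) : ℕ) = 3 := by
    have : ((3 : Fin (n+1)) : ℕ) = 3 % (n+1) := rfl
    rw [this, Nat.mod_eq_of_lt (by omega)]
  have h01 : (0 : Fin (n+1)) ≠ 1 := Fin.ne_of_val_ne (by rw [val0, val1]; omega)
  have h02 : (0 : Fin (n+1)) ≠ 2 := Fin.ne_of_val_ne (by rw [val0, val2]; omega)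
  have h03 : (0 : Fin (n+1)) ≠ 3 := Fin.ne_of_val_ne (by rw [val0, val3]; omega)
  have h12 : (1 : Fin (n+1)) ≠ 2 := Fin.ne_of_val_ne (by rw [val1, val2]; omega)
  have h13 : (1 : Fin (n+1)) ≠ 3 := Fin.ne_of_val_ne (by rw [val1, val3]; omega)
  have h23 : (2 : Fin (n+1)) ≠ 3 := Fin.ne_of_val_ne (by rw [val2, val3]; omega)
  -- values of the small literals of `Fin n`
  have wal0 : ((0 : Fin n) : ℕ) = 0 := by
    have : ((0 : Fin n) : ℕ) = 0 % n := rfl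
    rw [this, Nat.mod_eq_of_lt (by omega)]
  have wal1 : ((1 : Fin n) : ℕ) = 1 := by
    have : ((1 : Fin n) : ℕ) = 1 % n := rfl
    rw [this, Nat.mod_eq_of_lt (by omega)]
  have wal2 : ((2 : Fin n) : ℕ) = 2 := by
    have : ((2 : Fin n) : ℕ) = 2 % n := rfl
    rw [this, Nat.mod_eq_of_lt (by omega)]
  have w01 : (0 : Fin n) ≠ 1 := Fin.ne_of_val_ne (by rw [wal0, wal1]; omega)
  have w02 : (0 : Fin n) ≠ 2 := Fin.ne_of_val_ne (by rw [wal0, wal2]; omega)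
  have w12 : (1 : Fin n) ≠ 2 := Fin.ne_of_val_ne (by rw [wal1, wal2]; omega)
  -- successors
  have s0 : (0 : Fin n).succ = (1 : Fin (n+1)) := Fin.ext (by rw [Fin.val_succ, wal0, val1])
  have s1 : (1 : Fin n).succ = (2 : Fin (n+1)) := Fin.ext (by rw [Fin.val_succ, wal1, val2])
  have s2 : (2 : Fin n).succ = (3 : Fin (n+1)) := Fin.ext (by rw [Fin.val_succ, wal2, val3])
  -- the atom probabilities
  have hatom : ∀ v : Fin 4 → Bool,
      μ {ω | εbar 0 ω = toR (v 0) ∧ εbar 1 ω = toR (v 1) ∧ εbar 2 ω = toR (v 2) ∧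
        εbar 3 ω = toR (v 3)} = (2 : ℝ≥0∞)⁻¹ ^ 4 := by
    intro v
    set σ' : Fin (n+1) → ℝ := fun j => if j = 0 then toR (v 0) else if j = 1 then toR (v 1)
      else if j = 2 then toR (v 2) else if j = 3 then toR (v 3) else 1 with hσ'
    have hσ'0 : σ' 0 = toR (v 0) := by simp [hσ']
    have hσ'1 : σ' 1 = toR (v 1) := by simp [hσ', h01.symm]
    have hσ'2 : σ' 2 = toR (v 2) := by simp [hσ', h02.symm, h12.symm]
    have hσ'3 : σ' 3 = toR (v 3) := by simp [hσ', h03.symm, h13.symm, h23.symm]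
    have hcard : ({0,1,2,3} : Finset (Fin (n+1))).card = 4 := by
      rw [Finset.card_insert_of_notMem (by simp [h01, h02, h03]),
        Finset.card_insert_of_notMem (by simp [h12, h13]),
        Finset.card_insert_of_notMem (by simp [h23]), Finset.card_singleton]
    have hpat : ∀ j, σ' j = 1 ∨ σ' j = -1 := by
      intro j
      simp only [hσ']
      split_ifs
      exacts [toR_mem _, toR_mem _, toR_mem _, toR_mem _, Or.inl rfl]
    have hres := hprob ({0,1,2,3} : Finset (Fin (n+1))) (by rw [hcard]; omega) σ' hpat
    rw [hcard] at hres
    have hset : {ω | ∀ j ∈ ({0,1,2,3} : Finset (Fin (n+1))), εbar j ω = σ' j}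
        = {ω | εbar 0 ω = toR (v 0) ∧ εbar 1 ω = toR (v 1) ∧ εbar 2 ω = toR (v 2) ∧
          εbar 3 ω = toR (v 3)} := by
      ext ω
      simp only [Set.mem_setOf_eq, Finset.mem_insert, Finset.mem_singleton, forall_eq_or_imp,
        forall_eq]
      rw [hσ'0, hσ'1, hσ'2, hσ'3]
    rw [hset] at hres
    exact hres
  -- each coordinate is ±1 a.e.
  have hpm : ∀ j : Fin (n+1), μ {ω | ¬(εbar j ω = 1 ∨ εbar j ω = -1)} = 0 := by
    intro j
    have h1 : μ {ω | εbar j ω = 1} = 2⁻¹ := by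
      have := hprob {j} (by rw [Finset.card_singleton]; omega) (fun _ => 1) (fun _ => Or.inl rfl)
      simpa using this
    have h2 : μ {ω | εbar j ω = -1} = 2⁻¹ := by
      have := hprob {j} (by rw [Finset.card_singleton]; omega) (fun _ => -1) (fun _ => Or.inr rfl)
      simpa using this
    have hd : Disjoint {ω | εbar j ω = 1} {ω | εbar j ω = -1} := by
      rw [Set.disjoint_left]
      intro ω hω1 hω2
      simp only [Set.mem_setOf_eq] at hω1 hω2
      rw [hω1] at hω2
      norm_num at hω2
    have hm1 : MeasurableSet {ω | εbar j ω = 1} := hmeas j (measurableSet_singleton 1)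
    have hm2 : MeasurableSet {ω | εbar j ω = -1} := hmeas j (measurableSet_singleton (-1))
    have hu : μ ({ω | εbar j ω = 1} ∪ {ω | εbar j ω = -1}) = 1 := by
      rw [measure_union hd hm2, h1, h2, ENNReal.inv_two_add_inv_two]
    have : {ω | ¬(εbar j ω = 1 ∨ εbar j ω = -1)}
        = ({ω | εbar j ω = 1} ∪ {ω | εbar j ω = -1})ᶜ := by
      ext ω; simp [Set.mem_union, not_or]
    rw [this, measure_compl (hm1.union hm2) (measure_ne_top _ _), hu, measure_univ, tsub_self]
  -- Part 2: the a.e. identity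
  have part2 : ∀ᵐ ω ∂μ, εbar 0 ω * (εbar 0 ω * εbar 1 ω * εbar 2 ω) *
      (εbar 0 ω * εbar 1 ω * εbar 3 ω) = εbar 0 ω * εbar 2 ω * εbar 3 ω := by
    have a0 : ∀ᵐ ω ∂μ, εbar 0 ω = 1 ∨ εbar 0 ω = -1 := by
      rw [MeasureTheory.ae_iff]; exact hpm 0
    have a1 : ∀ᵐ ω ∂μ, εbar 1 ω = 1 ∨ εbar 1 ω = -1 := by
      rw [MeasureTheory.ae_iff]; exact hpm 1
    filter_upwards [a0, a1] with ω h0 h1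
    rcases h0 with h0 | h0 <;> rcases h1 with h1 | h1 <;> rw [h0, h1] <;> ring
  -- Part 3: 4-wise independence of ε₀, ε₀ε₁, ε₀ε₂, ε₀ε₃
  have part3 : IsKWiseRademacher μ 4
      ![εbar 0, fun ω => εbar 0 ω * εbar 1 ω,
        fun ω => εbar 0 ω * εbar 2 ω, fun ω => εbar 0 ω * εbar 3 ω] := by
    constructor
    · intro i
      fin_cases i
      · exact hmeas 0
      · exact (hmeas 0).mul (hmeas 1)
      · exact (hmeas 0).mul (hmeas 2)
      · exact (hmeas 0).mul (hmeas 3)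
    · intro s hs σ hσ
      set sb : Fin 4 → Bool := fun i => if σ i = 1 then true else false with hsbdef
      have hsb : ∀ i, toR (sb i) = σ i := by
        intro i
        by_cases hone : σ i = 1
        · simp [hsbdef, hone, toR]
        · rcases hσ i with hx | hx
          · exact absurd hx hone
          · have hfalse : sb i = false := by simp [hsbdef, hone]
            rw [hfalse, hx]; simp [toR]
      have hc := core μ (εbar 0) (εbar 1) (εbar 2) (εbar 3) (hmeas 0) (hmeas 1) (hmeas 2)
        (hmeas 3) hatom
        {ω | ∀ i ∈ s, ![εbar 0, fun ω => εbar 0 ω * εbar 1 ω,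
          fun ω => εbar 0 ω * εbar 2 ω, fun ω => εbar 0 ω * εbar 3 ω] i ω = σ i}
        (fun v => decide (∀ i ∈ s, (if i = 0 then v 0 else (v 0 == v i)) = sb i)) ?_
      · rw [hc]
        have hcount : (Finset.univ.filter fun v : Fin 4 → Bool =>
            (decide (∀ i ∈ s, (if i = 0 then v 0 else (v 0 == v i)) = sb i)) = true).card
            = 2 ^ (4 - s.card) := by
          rw [← countLemma s sb]
          congr 1
          ext v
          simp
        rw [hcount, Nat.cast_pow, Nat.cast_ofNat]
        exact arithLemma hs
      · intro v ω e0 e1 e2 e3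
        simp only [Set.mem_setOf_eq, decide_eq_true_eq]
        apply forall_congr'
        intro i
        apply imp_congr_right
        intro _
        fin_cases i
        · show εbar 0 ω = σ 0 ↔ (if (0 : Fin 4) = 0 then v 0 else (v 0 == v 0)) = sb 0
          rw [if_pos rfl, e0, ← hsb 0]
          exact toR_inj
        · show εbar 0 ω * εbar 1 ω = σ 1 ↔
            (if (1 : Fin 4) = 0 then v 0 else (v 0 == v 1)) = sb 1
          rw [if_neg (by decide : ¬(1 : Fin 4) = 0), e0, e1, toR_mul, ← hsb 1]
          exact toR_inj
        · show εbar 0 ω * εbar 2 ω = σ 2 ↔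
            (if (2 : Fin 4) = 0 then v 0 else (v 0 == v 2)) = sb 2
          rw [if_neg (by decide : ¬(2 : Fin 4) = 0), e0, e2, toR_mul, ← hsb 2]
          exact toR_inj
        · show εbar 0 ω * εbar 3 ω = σ 3 ↔
            (if (3 : Fin 4) = 0 then v 0 else (v 0 == v 3)) = sb 3
          rw [if_neg (by decide : ¬(3 : Fin 4) = 0), e0, e3, toR_mul, ← hsb 3]
          exact toR_inj
  -- Part 1: the quadruple is NOT 4-wise Rademacher
  have part1 : ¬ IsKWiseRademacher μ 4
      ![εbar 0, fun ω => εbar 0 ω * εbar 1 ω * εbar 2 ω,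
        fun ω => εbar 0 ω * εbar 1 ω * εbar 3 ω,
        fun ω => εbar 0 ω * εbar 2 ω * εbar 3 ω] := by
    rintro ⟨-, H2⟩
    have hres := H2 ({0,1,2,3} : Finset (Fin 4)) (by decide) ![1,1,1,-1]
      (by intro i; fin_cases i <;> norm_num)
    rw [show (({0,1,2,3} : Finset (Fin 4)).card = 4) by decide] at hres
    have hc := core μ (εbar 0) (εbar 1) (εbar 2) (εbar 3) (hmeas 0) (hmeas 1) (hmeas 2)
      (hmeas 3) hatom
      {ω | ∀ i ∈ ({0,1,2,3} : Finset (Fin 4)),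
        ![εbar 0, fun ω => εbar 0 ω * εbar 1 ω * εbar 2 ω,
          fun ω => εbar 0 ω * εbar 1 ω * εbar 3 ω,
          fun ω => εbar 0 ω * εbar 2 ω * εbar 3 ω] i ω = ![(1:ℝ),1,1,-1] i}
      (fun v => decide (∀ i ∈ ({0,1,2,3} : Finset (Fin 4)),
        (if i = 0 then v 0 else if i = 1 then ((v 0 == v 1) == v 2)
          else if i = 2 then ((v 0 == v 1) == v 3) else ((v 0 == v 2) == v 3))
          = ![true, true, true, false] i)) ?_
    · rw [hc, show (Finset.univ.filter fun v : Fin 4 → Bool =>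
        (decide (∀ i ∈ ({0,1,2,3} : Finset (Fin 4)),
        (if i = 0 then v 0 else if i = 1 then ((v 0 == v 1) == v 2)
          else if i = 2 then ((v 0 == v 1) == v 3) else ((v 0 == v 2) == v 3))
          = ![true, true, true, false] i)) = true).card = 0 from by decide] at hres
      rw [Nat.cast_zero, zero_mul] at hres
      have : (2:ℝ≥0∞)⁻¹ ^ 4 ≠ 0 := by
        rw [← ENNReal.inv_pow]
        exact ENNReal.inv_ne_zero.2 (by norm_num)
      exact this hres.symm
    · intro v ω e0 e1 e2 e3
      simp only [Set.mem_setOf_eq, decide_eq_true_eq]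
      apply forall_congr'
      intro i
      apply imp_congr_right
      intro _
      fin_cases i
      · show εbar 0 ω = (1:ℝ) ↔
          (if (0 : Fin 4) = 0 then v 0 else if (0 : Fin 4) = 1 then ((v 0 == v 1) == v 2)
            else if (0 : Fin 4) = 2 then ((v 0 == v 1) == v 3) else ((v 0 == v 2) == v 3)) = true
        rw [if_pos rfl, e0]
        exact toR_eq_one
      · show εbar 0 ω * εbar 1 ω * εbar 2 ω = (1:ℝ) ↔
          (if (1 : Fin 4) = 0 then v 0 else if (1 : Fin 4) = 1 then ((v 0 == v 1) == v 2)
            else if (1 : Fin 4) = 2 then ((v 0 == v 1) == v 3) else ((v 0 == v 2) == v 3)) = true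
        rw [if_neg (by decide : ¬(1 : Fin 4) = 0), if_pos rfl, e0, e1, e2, toR_mul, toR_mul]
        exact toR_eq_one
      · show εbar 0 ω * εbar 1 ω * εbar 3 ω = (1:ℝ) ↔
          (if (2 : Fin 4) = 0 then v 0 else if (2 : Fin 4) = 1 then ((v 0 == v 1) == v 2)
            else if (2 : Fin 4) = 2 then ((v 0 == v 1) == v 3) else ((v 0 == v 2) == v 3)) = true
        rw [if_neg (by decide : ¬(2 : Fin 4) = 0), if_neg (by decide : ¬(2 : Fin 4) = 1),
          if_pos rfl, e0, e1, e3, toR_mul, toR_mul]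
        exact toR_eq_one
      · show εbar 0 ω * εbar 2 ω * εbar 3 ω = (-1:ℝ) ↔
          (if (3 : Fin 4) = 0 then v 0 else if (3 : Fin 4) = 1 then ((v 0 == v 1) == v 2)
            else if (3 : Fin 4) = 2 then ((v 0 == v 1) == v 3) else ((v 0 == v 2) == v 3)) = false
        rw [if_neg (by decide : ¬(3 : Fin 4) = 0), if_neg (by decide : ¬(3 : Fin 4) = 1),
          if_neg (by decide : ¬(3 : Fin 4) = 2), e0, e2, e3, toR_mul, toR_mul]
        exact toR_eq_neg_one
  -- values of f on small sets
  have hf0 : ∀ ω, f ∅ ω = εbar 0 ω := by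
    intro ω; rw [hf]; simp
  have hfa : ∀ ω, f {0} ω = εbar 0 ω * εbar 1 ω := by
    intro ω; rw [hf, Finset.prod_singleton, s0]
  have hfb : ∀ ω, f {1} ω = εbar 0 ω * εbar 2 ω := by
    intro ω; rw [hf, Finset.prod_singleton, s1]
  have hfc : ∀ ω, f {2} ω = εbar 0 ω * εbar 3 ω := by
    intro ω; rw [hf, Finset.prod_singleton, s2]
  have hfd : ∀ ω, f {0,1} ω = εbar 0 ω * (εbar 1 ω * εbar 2 ω) := by
    intro ω; rw [hf, Finset.prod_pair w01, s0, s1]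
  have mf : ∀ S, Measurable (f S) := by
    intro S
    have hfS : f S = fun ω => εbar 0 ω * ∏ i ∈ S, εbar i.succ ω := funext (hf S)
    rw [hfS]
    exact (hmeas 0).mul (Finset.measurable_prod _ (fun i _ => hmeas i.succ))
  -- Finset inequalities
  have hq0 : (∅ : Finset (Fin n)) ≠ {0,1} := Ne.symm (Finset.insert_ne_empty _ _)
  have hq0' : (∅ : Finset (Fin n)) ≠ {2} := Ne.symm (Finset.singleton_ne_empty _)
  have hq0a : (∅ : Finset (Fin n)) ≠ {0} := Ne.symm (Finset.singleton_ne_empty _)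
  have hq0b : (∅ : Finset (Fin n)) ≠ {1} := Ne.symm (Finset.singleton_ne_empty _)
  have hq1 : ({0} : Finset (Fin n)) ≠ {0,1} := by
    intro hh
    have h1 : (1 : Fin n) ∈ ({0,1} : Finset (Fin n)) := by simp
    rw [← hh] at h1
    simp only [Finset.mem_singleton] at h1
    exact w01 h1.symm
  have hq1' : ({0} : Finset (Fin n)) ≠ {2} := fun hh => w02 (Finset.singleton_injective hh)
  have hq1a : ({0} : Finset (Fin n)) ≠ {1} := fun hh => w01 (Finset.singleton_injective hh)
  have hq2 : ({1} : Finset (Fin n)) ≠ {0,1} := by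
    intro hh
    have h1 : (0 : Fin n) ∈ ({0,1} : Finset (Fin n)) := by simp
    rw [← hh] at h1
    simp only [Finset.mem_singleton] at h1
    exact w01 h1
  have hq2' : ({1} : Finset (Fin n)) ≠ {2} := fun hh => w12 (Finset.singleton_injective hh)
  -- Part 4: not exchangeable
  have part4 : ¬ (∀ σ : Equiv.Perm (Finset (Fin n)),
      μ.map (fun ω => fun S => f (σ S) ω) = μ.map (fun ω => fun S => f S ω)) := by
    intro hall
    set A : Set (Finset (Fin n) → ℝ) :=
      (fun x : Finset (Fin n) → ℝ => x ∅ * x {0} * x {1} * x {0,1}) ⁻¹' {1} with hAdef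
    have hAmeas : MeasurableSet A :=
      ((((measurable_pi_apply (∅ : Finset (Fin n))).mul (measurable_pi_apply {0})).mul
        (measurable_pi_apply {1})).mul (measurable_pi_apply {0,1}))
        (measurableSet_singleton 1)
    set σp : Equiv.Perm (Finset (Fin n)) := Equiv.swap ({0,1} : Finset (Fin n)) {2} with hσp
    have sw0 : σp ∅ = ∅ := Equiv.swap_apply_of_ne_of_ne hq0 hq0'
    have sw1 : σp {0} = {0} := Equiv.swap_apply_of_ne_of_ne hq1 hq1'
    have sw2 : σp {1} = {1} := Equiv.swap_apply_of_ne_of_ne hq2 hq2'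
    have sw3 : σp {0,1} = {2} := Equiv.swap_apply_left _ _
    have key := congrArg (fun m : Measure (Finset (Fin n) → ℝ) => m A) (hall σp)
    rw [Measure.map_apply (measurable_pi_lambda _ (fun S => mf (σp S))) hAmeas,
      Measure.map_apply (measurable_pi_lambda _ (fun S => mf S)) hAmeas] at key
    have hpre1 : (fun ω => fun S => f (σp S) ω) ⁻¹' A
        = {ω | f ∅ ω * f {0} ω * f {1} ω * f {2} ω = 1} := by
      ext ω
      simp only [Set.mem_preimage, hAdef, Set.mem_singleton_iff, Set.mem_setOf_eq]
      rw [sw0, sw1, sw2, sw3]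
    have hpre2 : (fun ω => fun S => f S ω) ⁻¹' A
        = {ω | f ∅ ω * f {0} ω * f {1} ω * f {0,1} ω = 1} := by
      ext ω
      simp only [Set.mem_preimage, hAdef, Set.mem_singleton_iff, Set.mem_setOf_eq]
    have hE1 : ∀ v : Fin 4 → Bool, ∀ ω, εbar 0 ω = toR (v 0) → εbar 1 ω = toR (v 1) →
        εbar 2 ω = toR (v 2) → εbar 3 ω = toR (v 3) →
        (ω ∈ {ω | f ∅ ω * f {0} ω * f {1} ω * f {2} ω = 1} ↔
          (((v 0 == (v 0 == v 1)) == (v 0 == v 2)) == (v 0 == v 3)) = true) := by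
      intro v ω e0 e1 e2 e3
      simp only [Set.mem_setOf_eq]
      rw [hf0 ω, hfa ω, hfb ω, hfc ω, e0, e1, e2, e3]
      simp only [toR_mul]
      exact toR_eq_one
    have hc1 := core μ (εbar 0) (εbar 1) (εbar 2) (εbar 3) (hmeas 0) (hmeas 1) (hmeas 2)
      (hmeas 3) hatom {ω | f ∅ ω * f {0} ω * f {1} ω * f {2} ω = 1}
      (fun v => ((v 0 == (v 0 == v 1)) == (v 0 == v 2)) == (v 0 == v 3)) hE1
    have hE2 : ∀ v : Fin 4 → Bool, ∀ ω, εbar 0 ω = toR (v 0) → εbar 1 ω = toR (v 1) →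
        εbar 2 ω = toR (v 2) → εbar 3 ω = toR (v 3) →
        (ω ∈ {ω | f ∅ ω * f {0} ω * f {1} ω * f {0,1} ω = 1} ↔
          (((v 0 == (v 0 == v 1)) == (v 0 == v 2)) == (v 0 == (v 1 == v 2))) = true) := by
      intro v ω e0 e1 e2 e3
      simp only [Set.mem_setOf_eq]
      rw [hf0 ω, hfa ω, hfb ω, hfd ω, e0, e1, e2]
      simp only [toR_mul]
      exact toR_eq_one
    have hc2 := core μ (εbar 0) (εbar 1) (εbar 2) (εbar 3) (hmeas 0) (hmeas 1) (hmeas 2)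
      (hmeas 3) hatom {ω | f ∅ ω * f {0} ω * f {1} ω * f {0,1} ω = 1}
      (fun v => ((v 0 == (v 0 == v 1)) == (v 0 == v 2)) == (v 0 == (v 1 == v 2))) hE2
    rw [hpre1, hpre2, hc1, hc2] at key
    rw [show (Finset.univ.filter fun v : Fin 4 → Bool =>
        (((v 0 == (v 0 == v 1)) == (v 0 == v 2)) == (v 0 == v 3)) = true).card = 8 from by decide,
      show (Finset.univ.filter fun v : Fin 4 → Bool =>
        (((v 0 == (v 0 == v 1)) == (v 0 == v 2)) == (v 0 == (v 1 == v 2))) = true).card = 16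
        from by decide] at key
    have c8 : ((8:ℕ):ℝ≥0∞) * (2:ℝ≥0∞)⁻¹ ^ 4 = 2⁻¹ := by
      have := arithLemma (show (1:ℕ) ≤ 4 by norm_num)
      rw [show ((8:ℕ):ℝ≥0∞) = (2:ℝ≥0∞) ^ (4-1) by norm_num]
      simpa using this
    have c16 : ((16:ℕ):ℝ≥0∞) * (2:ℝ≥0∞)⁻¹ ^ 4 = 1 := by
      have := arithLemma (show (0:ℕ) ≤ 4 by norm_num)
      rw [show ((16:ℕ):ℝ≥0∞) = (2:ℝ≥0∞) ^ (4-0) by norm_num]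
      simpa using this
    rw [c8, c16] at key
    exact absurd key (ne_of_lt (ENNReal.inv_lt_one.2 (by norm_num)))
  -- Part 5: the law differs from PMeas
  have part5 : μ.map (fun ω => fun j : Fin (2 ^ n) => f (e.symm j) ω) ≠ PMeas (2 ^ n) := by
    intro heq
    have hN8 : 8 ≤ 2 ^ n := by
      calc (8:ℕ) = 2 ^ 3 := by norm_num
      _ ≤ 2 ^ n := Nat.pow_le_pow_right (by norm_num) hn
    set B : Set (Fin (2 ^ n) → ℝ) :=
      (fun x : Fin (2 ^ n) → ℝ => x (e ∅) * x (e {0}) * x (e {1}) * x (e {0,1})) ⁻¹' {1}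
      with hBdef
    have hBmeas : MeasurableSet B :=
      ((((measurable_pi_apply (e ∅)).mul (measurable_pi_apply (e {0}))).mul
        (measurable_pi_apply (e {1}))).mul (measurable_pi_apply (e {0,1})))
        (measurableSet_singleton 1)
    have hBc : MeasurableSet Bᶜ := hBmeas.compl
    -- LHS is zero on Bᶜ
    have hL : μ.map (fun ω => fun j : Fin (2 ^ n) => f (e.symm j) ω) Bᶜ = 0 := by
      rw [Measure.map_apply (measurable_pi_lambda _ (fun j => mf (e.symm j))) hBc]
      have hpre : (fun ω => fun j : Fin (2 ^ n) => f (e.symm j) ω) ⁻¹' Bᶜ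
          = {ω | ¬ (f ∅ ω * f {0} ω * f {1} ω * f {0,1} ω = 1)} := by
        ext ω
        simp only [Set.mem_preimage, Set.mem_compl_iff, hBdef, Set.mem_singleton_iff,
          Equiv.symm_apply_apply, Set.mem_setOf_eq]
      rw [hpre]
      have hE5 : ∀ v : Fin 4 → Bool, ∀ ω, εbar 0 ω = toR (v 0) → εbar 1 ω = toR (v 1) →
          εbar 2 ω = toR (v 2) → εbar 3 ω = toR (v 3) →
          (ω ∈ {ω | ¬ (f ∅ ω * f {0} ω * f {1} ω * f {0,1} ω = 1)} ↔
            (!(((v 0 == (v 0 == v 1)) == (v 0 == v 2)) == (v 0 == (v 1 == v 2)))) = true) := by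
        intro v ω e0 e1 e2 e3
        simp only [Set.mem_setOf_eq, Bool.not_eq_true']
        rw [hf0 ω, hfa ω, hfb ω, hfd ω, e0, e1, e2]
        simp only [toR_mul]
        rw [toR_eq_one]
        simp
      have hc5 := core μ (εbar 0) (εbar 1) (εbar 2) (εbar 3) (hmeas 0) (hmeas 1) (hmeas 2)
        (hmeas 3) hatom {ω | ¬ (f ∅ ω * f {0} ω * f {1} ω * f {0,1} ω = 1)}
        (fun v => !(((v 0 == (v 0 == v 1)) == (v 0 == v 2)) == (v 0 == (v 1 == v 2)))) hE5
      rw [hc5, show (Finset.univ.filter fun v : Fin 4 → Bool =>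
        (!(((v 0 == (v 0 == v 1)) == (v 0 == v 2)) == (v 0 == (v 1 == v 2)))) = true).card = 0
        from by decide]
      simp
    -- RHS is positive on Bᶜ
    -- pick a suitable set T0
    have hfour : ({e ∅, e {0}, e {1}, e {0,1}} : Finset (Fin (2 ^ n))).card = 4 := by
      rw [Finset.card_insert_of_notMem (by
          simp only [Finset.mem_insert, Finset.mem_singleton]
          push_neg
          exact ⟨e.injective.ne hq0a, e.injective.ne hq0b, e.injective.ne hq0⟩),
        Finset.card_insert_of_notMem (by
          simp only [Finset.mem_insert, Finset.mem_singleton]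
          push_neg
          exact ⟨e.injective.ne hq1a, e.injective.ne hq1⟩),
        Finset.card_insert_of_notMem (by
          simp only [Finset.mem_singleton]
          exact e.injective.ne hq2),
        Finset.card_singleton]
    have hcompl : ((Finset.univ : Finset (Fin (2 ^ n)))
        \ {e ∅, e {0}, e {1}, e {0,1}}).card = 2 ^ n - 4 := by
      rw [Finset.card_sdiff_of_subset (Finset.subset_univ _), hfour, Finset.card_univ, Fintype.card_fin]
    obtain ⟨T', hT'sub, hT'card⟩ := Finset.exists_subset_card_eq
      (s := (Finset.univ : Finset (Fin (2 ^ n))) \ {e ∅, e {0}, e {1}, e {0,1}})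
      (n := 2 ^ n / 2 - 1) (by rw [hcompl]; omega)
    have hT'mem : ∀ x ∈ T', x ∉ ({e ∅, e {0}, e {1}, e {0,1}} : Finset (Fin (2 ^ n))) := by
      intro x hx
      have := hT'sub hx
      rw [Finset.mem_sdiff] at this
      exact this.2
    set T0 : Finset (Fin (2 ^ n)) := insert (e ∅) T' with hT0
    have hi0T' : e ∅ ∉ T' := by
      intro hmem
      exact hT'mem _ hmem (by simp)
    have hT0card : T0.card = 2 ^ n / 2 := by
      rw [hT0, Finset.card_insert_of_notMem hi0T', hT'card]
      omega
    -- the corresponding sign vector is in Bᶜ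
    have hmem0 : e ∅ ∈ T0 := Finset.mem_insert_self _ _
    have hnot1 : e {0} ∉ T0 := by
      rw [hT0, Finset.mem_insert]
      push_neg
      exact ⟨(e.injective.ne hq0a).symm, fun hmem => hT'mem _ hmem (by simp)⟩
    have hnot2 : e {1} ∉ T0 := by
      rw [hT0, Finset.mem_insert]
      push_neg
      exact ⟨(e.injective.ne hq0b).symm, fun hmem => hT'mem _ hmem (by simp)⟩
    have hnot3 : e {0,1} ∉ T0 := by
      rw [hT0, Finset.mem_insert]
      push_neg
      exact ⟨(e.injective.ne hq0).symm, fun hmem => hT'mem _ hmem (by simp)⟩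
    have hvB : (fun i => if i ∈ T0 then (1:ℝ) else -1) ∈ Bᶜ := by
      simp only [hBdef, Set.mem_compl_iff, Set.mem_preimage, Set.mem_singleton_iff]
      rw [if_pos hmem0, if_neg hnot1, if_neg hnot2, if_neg hnot3]
      norm_num
    have hPB : 1 ≤ PB (2 ^ n) Bᶜ * (((2 ^ n : ℕ).choose (2 ^ n / 2) : ℝ≥0∞)) := by
      rw [PB, Measure.smul_apply, smul_eq_mul]
      have hT0f : T0 ∈ Finset.univ.filter
          (fun T : Finset (Fin (2 ^ n)) => T.card = 2 ^ n / 2) := by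
        simp [hT0card]
      have hdir : Measure.dirac (fun i => if i ∈ T0 then (1:ℝ) else -1) Bᶜ = 1 := by
        rw [Measure.dirac_apply' _ hBc, Set.indicator_of_mem hvB]
        rfl
      have hsum : (1:ℝ≥0∞) ≤ ∑ T ∈ Finset.univ.filter
          (fun T : Finset (Fin (2 ^ n)) => T.card = 2 ^ n / 2),
          Measure.dirac (fun i => if i ∈ T then (1:ℝ) else -1) Bᶜ := by
        rw [← hdir]
        exact Finset.single_le_sum (f := fun T : Finset (Fin (2 ^ n)) =>
          Measure.dirac (fun i => if i ∈ T then (1:ℝ) else -1) Bᶜ)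
          (fun _ _ => zero_le) hT0f
      calc (1:ℝ≥0∞) ≤ ((((2 ^ n : ℕ).choose (2 ^ n / 2) : ℝ≥0∞))⁻¹ *
          ∑ T ∈ Finset.univ.filter (fun T : Finset (Fin (2 ^ n)) => T.card = 2 ^ n / 2),
            Measure.dirac (fun i => if i ∈ T then (1:ℝ) else -1) Bᶜ) *
          (((2 ^ n : ℕ).choose (2 ^ n / 2) : ℝ≥0∞)) := by
            rw [mul_comm _ (((2 ^ n : ℕ).choose (2 ^ n / 2) : ℝ≥0∞)), ← mul_assoc,
              ENNReal.mul_inv_cancel ?_ (ENNReal.natCast_ne_top _), one_mul]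
            · exact le_trans hsum le_rfl
            · exact_mod_cast Nat.choose_pos (Nat.div_le_self _ _) |>.ne'
      _ = _ := by rw [Measure.finset_sum_apply]
    have hPBne : PB (2 ^ n) Bᶜ ≠ 0 := by
      intro h0
      rw [h0, zero_mul] at hPB
      exact absurd hPB (by norm_num)
    have hR : PMeas (2 ^ n) Bᶜ ≠ 0 := by
      rw [PMeas, Measure.add_apply, Measure.smul_apply, Measure.smul_apply, smul_eq_mul,
        smul_eq_mul]
      intro h0
      rw [add_eq_zero] at h0
      have h2 := h0.2
      rcases mul_eq_zero.1 h2 with hdiv | hpb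
      · rw [ENNReal.div_eq_zero_iff] at hdiv
        rcases hdiv with hnum | htop
        · rw [tsub_eq_zero_iff_le] at hnum
          have : ((2 ^ n : ℕ) : ℝ≥0∞) ≤ ((1 : ℕ) : ℝ≥0∞) := by
            exact_mod_cast hnum
          rw [Nat.cast_le] at this
          omega
        · exact ENNReal.natCast_ne_top _ (by exact_mod_cast htop)
      · exact hPBne hpb
    rw [heq] at hL
    exact hR hL
  exact ⟨part1, part2, part3, part4, part5⟩
end
end

section
/- The measure P = (1/N)P_a + ((N−1)/N)P_b on {−1,1}^N (N even, P_a uniform on constant sign vectors, P_b uniform on balanced sign vectors) is 3-wise independent: its projection onto any three distinct coordinates is the uniform measure on {−1,1}³. Consequently, C(N,p,3) = N^{1/2−1/p} for N even and p ≥ 2. -/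
open MeasureTheory ENNReal

noncomputable section
set_option linter.unusedSectionVars false

/-- `CNpk N p k` : the best constant in the upper Khintchine inequality with exponent `p`
over all `k`-wise independent Rademacher vectors of length `N` and unit vectors `a`. -/
def CNpk (N : ℕ) (p : ℝ) (k : ℕ) : ℝ :=
  sSup {x : ℝ | ∃ (Ω : Type) (_ : MeasurableSpace Ω) (μ : Measure Ω),
    IsProbabilityMeasure μ ∧ ∃ (ε : Fin N → Ω → ℝ) (a : Fin N → ℝ),
      IsKWiseRademacher μ k ε ∧ (∑ i, (a i) ^ 2 = 1) ∧
      x = (∫ ω, |∑ i, a i * ε i ω| ^ p ∂μ) ^ (1 / p)}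


section Aux


lemma hh1b (n : ℕ) : (2*n+1).choose n = (2*n+1).choose (n+1) := by
  have h := Nat.choose_symm (show n+1 ≤ 2*n+1 by omega)
  rwa [show 2*n+1 - (n+1) = n from by omega] at h

lemma hh1 (n : ℕ) : (2*(n+1)).choose (n+1) = 2 * ((2*n+1).choose (n+1)) := by
  have e1 : 2*(n+1) = (2*n+1) + 1 := by omega
  rw [e1, Nat.choose_succ_succ, ← hh1b n]; ring

lemma hh2x (n : ℕ) : (2*n).choose (n+1) * (n+1) = (2*n).choose n * n := by
  have := Nat.choose_succ_right_eq (2*n) n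
  rw [this]; congr 1; omega

lemma hh2 (n : ℕ) : (n+1) * (2*(n+1)).choose (n+1) = 2*(2*n+1) * ((2*n).choose n) := by
  have pas : (2*n+1).choose (n+1) = (2*n).choose n + (2*n).choose (n+1) := Nat.choose_succ_succ _ _
  have key : (n+1) * (2*n+1).choose (n+1) = (2*n+1) * (2*n).choose n := by
    have hx := hh2x n
    nlinarith [pas, hx]
  rw [hh1 n]
  nlinarith [key]

lemma hh5 (k : ℕ) : (k+2) * (2*(k+2)).choose (k+2) = 4*(2*k+3) * ((2*k+1).choose (k+1)) := by
  have h2 := hh2 (k+1)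
  have h3 := hh1 k   -- (2*(k+1)).choose (k+1) = 2 * ((2*k+1).choose (k+1))
  have e : 2*(k+1)+1 = 2*k+3 := by omega
  rw [show k+1+1 = k+2 by omega] at h2
  rw [e] at h2
  rw [h2, h3]; ring

lemma hh4 (k : ℕ) : (2*k+1).choose (k+2) * (k+2) = (2*k+1).choose (k+1) * k := by
  have := Nat.choose_succ_right_eq (2*k+1) (k+1)
  rw [this]; congr 1; omega

/-- master arithmetic identity -/
lemma master {n m j : ℕ} (hn : 1 ≤ n) (hm : m ≤ 3) (hmN : m ≤ 2*n) (hj : j ≤ m) :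
    2^m * (2*n).choose n * ((if j = m then 1 else 0) + (if j = 0 then 1 else 0))
      + 2^(m+1) * (2*n - 1) * (if j ≤ n then (2*n - m).choose (n - j) else 0)
    = 4*n * (2*n).choose n := by
  interval_cases m <;> interval_cases j
  · -- m = 0, j = 0
    obtain ⟨k, rfl⟩ : ∃ k, n = k + 1 := ⟨n-1, by omega⟩
    rw [if_pos rfl, if_pos (by omega), Nat.sub_zero, Nat.sub_zero,
      (by omega : 2*(k+1)-1 = 2*k+1)]
    ring
  · -- m = 1, j = 0
    obtain ⟨k, rfl⟩ : ∃ k, n = k + 1 := ⟨n-1, by omega⟩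
    rw [if_neg (by omega), if_pos rfl, if_pos (by omega), Nat.sub_zero,
      (by omega : 2*(k+1)-1 = 2*k+1), hh1 k]
    ring
  · -- m = 1, j = 1
    obtain ⟨k, rfl⟩ : ∃ k, n = k + 1 := ⟨n-1, by omega⟩
    rw [if_pos rfl, if_neg (by omega), if_pos (by omega),
      (by omega : 2*(k+1)-1 = 2*k+1), (by omega : k+1-1 = k), hh1b k, hh1 k]
    ring
  · -- m = 2, j = 0
    obtain ⟨k, rfl⟩ : ∃ k, n = k + 1 := ⟨n-1, by omega⟩
    rw [if_neg (by omega), if_pos rfl, if_pos (by omega), Nat.sub_zero,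
      (by omega : 2*(k+1)-1 = 2*k+1), (by omega : 2*(k+1)-2 = 2*k)]
    apply Nat.eq_of_mul_eq_mul_left (show 0 < k+1 by omega)
    have hx := hh2x k
    have h := hh2 k
    zify at hx h ⊢
    linear_combination 8*(2*k+1)*hx - 4*k*h
  · -- m = 2, j = 1
    obtain ⟨k, rfl⟩ : ∃ k, n = k + 1 := ⟨n-1, by omega⟩
    rw [if_neg (by omega), if_neg (by omega), if_pos (by omega),
      (by omega : 2*(k+1)-1 = 2*k+1), (by omega : 2*(k+1)-2 = 2*k), (by omega : k+1-1 = k)]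
    have h := hh2 k
    zify at h ⊢
    linear_combination (-4 : ℤ)*h
  · -- m = 2, j = 2
    by_cases h2n : 2 ≤ n
    · obtain ⟨k, rfl⟩ : ∃ k, n = k + 2 := ⟨n-2, by omega⟩
      rw [if_pos rfl, if_neg (by omega), if_pos (by omega),
        (by omega : 2*(k+2)-1 = 2*(k+1)+1), (by omega : 2*(k+2)-2 = 2*(k+1)),
        (by omega : k+2-2 = k)]
      have symm : (2*(k+1)).choose k = (2*(k+1)).choose (k+2) := by
        have h := Nat.choose_symm (show k+2 ≤ 2*(k+1) by omega)
        rwa [show 2*(k+1) - (k+2) = k from by omega] at h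
      rw [symm]
      apply Nat.eq_of_mul_eq_mul_left (show 0 < k+2 by omega)
      have hx := hh2x (k+1)
      have h := hh2 (k+1)
      rw [(by omega : k+1+1 = k+2)] at hx h
      zify at hx h ⊢
      linear_combination 8*(2*(k+1)+1)*hx - 4*(k+1)*h
    · have hn1 : n = 1 := by omega
      subst hn1
      rw [if_pos rfl, if_neg (by omega), if_neg (by omega)]
      decide
  · -- m = 3, j = 0
    obtain ⟨k, rfl⟩ : ∃ k, n = k + 2 := ⟨n-2, by omega⟩
    rw [if_neg (by omega), if_pos rfl, if_pos (by omega), Nat.sub_zero,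
      (by omega : 2*(k+2)-1 = 2*(k+1)+1), (by omega : 2*(k+2)-3 = 2*k+1)]
    apply Nat.eq_of_mul_eq_mul_left (show 0 < k+2 by omega)
    have hx := hh4 k
    have h := hh5 k
    zify at hx h ⊢
    linear_combination 16*(2*k+3)*hx - 4*k*h
  · -- m = 3, j = 1
    obtain ⟨k, rfl⟩ : ∃ k, n = k + 2 := ⟨n-2, by omega⟩
    rw [if_neg (by omega), if_neg (by omega), if_pos (by omega),
      (by omega : 2*(k+2)-1 = 2*(k+1)+1), (by omega : 2*(k+2)-3 = 2*k+1),
      (by omega : k+2-1 = k+1)]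
    have h := hh5 k
    zify at h ⊢
    linear_combination (-4 : ℤ)*h
  · -- m = 3, j = 2
    obtain ⟨k, rfl⟩ : ∃ k, n = k + 2 := ⟨n-2, by omega⟩
    rw [if_neg (by omega), if_neg (by omega), if_pos (by omega),
      (by omega : 2*(k+2)-1 = 2*(k+1)+1), (by omega : 2*(k+2)-3 = 2*k+1),
      (by omega : k+2-2 = k)]
    have symm : (2*k+1).choose k = (2*k+1).choose (k+1) := hh1b k
    rw [symm]
    have h := hh5 k
    zify at h ⊢
    linear_combination (-4 : ℤ)*h
  · -- m = 3, j = 3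
    by_cases h3n : 3 ≤ n
    · obtain ⟨k, rfl⟩ : ∃ k, n = k + 3 := ⟨n-3, by omega⟩
      rw [if_pos rfl, if_neg (by omega), if_pos (by omega),
        (by omega : 2*(k+3)-1 = 2*(k+2)+1), (by omega : 2*(k+3)-3 = 2*(k+1)+1),
        (by omega : k+3-3 = k)]
      have symm : (2*(k+1)+1).choose k = (2*(k+1)+1).choose (k+3) := by
        have h := Nat.choose_symm (show k+3 ≤ 2*(k+1)+1 by omega)
        rwa [show 2*(k+1)+1 - (k+3) = k from by omega] at h
      rw [symm]
      apply Nat.eq_of_mul_eq_mul_left (show 0 < k+3 by omega)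
      have hx := hh4 (k+1)
      have h := hh5 (k+1)
      rw [(by omega : k+1+1 = k+2)] at hx h
      rw [(by omega : k+1+2 = k+3)] at hx h
      zify at hx h ⊢
      linear_combination 16*(2*k+5)*hx - 4*(k+1)*h
    · have hn1 : n = 2 := by omega
      subst hn1
      rw [if_pos rfl, if_neg (by omega), if_neg (by omega)]
      decide


lemma count_balanced {N : ℕ} (s A : Finset (Fin N)) (hA : A ⊆ s) (n : ℕ) :
    ((Finset.univ.filter (fun T : Finset (Fin N) => T.card = n ∧ T ∩ s = A))).card
      = if A.card ≤ n then (N - s.card).choose (n - A.card) else 0 := by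
  split_ifs with hcard
  · have hcc : sᶜ.card = N - s.card := by
      rw [Finset.card_compl, Fintype.card_fin]
    rw [← hcc, ← Finset.card_powersetCard (n - A.card) sᶜ]
    apply Finset.card_nbij' (fun T => T \ s) (fun U => A ∪ U)
    · intro T hT
      simp only [Finset.mem_coe, Finset.mem_filter, Finset.mem_univ, true_and] at hT
      rw [Finset.mem_coe, Finset.mem_powersetCard]
      constructor
      · intro x hx
        simp only [Finset.mem_sdiff] at hx
        simpa [Finset.mem_compl] using hx.2
      · have := Finset.card_inter_add_card_sdiff T s
        rw [hT.2, hT.1] at this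
        dsimp only
        omega
    · intro U hU
      rw [Finset.mem_coe, Finset.mem_powersetCard] at hU
      obtain ⟨hUs, hUc⟩ := hU
      have hdisj : Disjoint A U := by
        apply Finset.disjoint_left.2
        intro x hxA hxU
        exact (Finset.mem_compl.1 (hUs hxU)) (hA hxA)
      simp only [Finset.mem_coe, Finset.mem_filter, Finset.mem_univ, true_and]
      constructor
      · rw [Finset.card_union_of_disjoint hdisj, hUc]
        omega
      · rw [Finset.union_inter_distrib_right]
        rw [Finset.inter_eq_left.2 hA]
        have : U ∩ s = ∅ := by
          apply Finset.eq_empty_of_forall_notMem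
          intro x hx
          simp only [Finset.mem_inter] at hx
          exact (Finset.mem_compl.1 (hUs hx.1)) hx.2
        rw [this, Finset.union_empty]
    · intro T hT
      simp only [Finset.mem_coe, Finset.mem_filter, Finset.mem_univ, true_and] at hT
      rw [← hT.2]
      ext x
      simp only [Finset.mem_union, Finset.mem_inter, Finset.mem_sdiff]
      tauto
    · intro U hU
      rw [Finset.mem_coe, Finset.mem_powersetCard] at hU
      ext x
      simp only [Finset.mem_sdiff, Finset.mem_union]
      constructor
      · rintro ⟨hx1 | hx2, hxs⟩
        · exact absurd (hA hx1) hxs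
        · exact hx2
      · intro hx
        exact ⟨Or.inr hx, Finset.mem_compl.1 (hU.1 hx)⟩
  · apply Finset.card_eq_zero.2
    apply Finset.eq_empty_of_forall_notMem
    intro T hT
    simp only [Finset.mem_filter, Finset.mem_univ, true_and] at hT
    apply hcard
    rw [← hT.1, ← hT.2]
    exact Finset.card_le_card (Finset.inter_subset_left)

lemma cylinder_measurable {N : ℕ} (s : Finset (Fin N)) (σ : Fin N → ℝ) :
    MeasurableSet {x : Fin N → ℝ | ∀ i ∈ s, x i = σ i} := by
  have : {x : Fin N → ℝ | ∀ i ∈ s, x i = σ i}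
      = ⋂ i ∈ (s : Set (Fin N)), (fun x : Fin N → ℝ => x i) ⁻¹' {σ i} := by
    ext x; simp
  rw [this]
  exact MeasurableSet.biInter s.countable_toSet
    (fun i _ => (measurable_pi_apply i) (measurableSet_singleton _))

-- evaluation of PA on cylinders
lemma PA_apply {N : ℕ} (s : Finset (Fin N)) (σ : Fin N → ℝ) (hσ : ∀ i, σ i = 1 ∨ σ i = -1) :
    PA N {x : Fin N → ℝ | ∀ i ∈ s, x i = σ i}
      = (2:ℝ≥0∞)⁻¹ * ((if s.filter (fun i => σ i = 1) = s then 1 else 0)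
          + (if s.filter (fun i => σ i = 1) = ∅ then 1 else 0)) := by
  set E := {x : Fin N → ℝ | ∀ i ∈ s, x i = σ i} with hE
  have hmE := cylinder_measurable s σ
  rw [PA, Measure.smul_apply, Measure.add_apply, smul_eq_mul]
  congr 1
  have h1 : Measure.dirac (fun _ : Fin N => (1:ℝ)) E
      = if s.filter (fun i => σ i = 1) = s then 1 else 0 := by
    rw [Measure.dirac_apply' _ hmE]
    by_cases h : s.filter (fun i => σ i = 1) = s
    · rw [if_pos h, Set.indicator_of_mem, Pi.one_apply]
      intro i hi
      have := Finset.filter_eq_self.1 h i hi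
      exact this.symm
    · rw [if_neg h, Set.indicator_of_notMem]
      intro hmem
      exact h (Finset.filter_eq_self.2 (fun i hi => (hmem i hi).symm))
  have h2 : Measure.dirac (fun _ : Fin N => (-1:ℝ)) E
      = if s.filter (fun i => σ i = 1) = ∅ then 1 else 0 := by
    rw [Measure.dirac_apply' _ hmE]
    by_cases h : s.filter (fun i => σ i = 1) = ∅
    · rw [if_pos h, Set.indicator_of_mem, Pi.one_apply]
      intro i hi
      rcases hσ i with h1' | h1'
      · exfalso
        have : i ∈ s.filter (fun i => σ i = 1) := Finset.mem_filter.2 ⟨hi, h1'⟩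
        rw [h] at this
        exact absurd this (Finset.notMem_empty i)
      · exact h1'.symm
    · rw [if_neg h, Set.indicator_of_notMem]
      intro hmem
      apply h
      apply Finset.filter_eq_empty_iff.2
      intro i hi h1'
      have := hmem i hi
      rw [h1'] at this
      norm_num at this
  rw [h1, h2]

lemma PB_apply {N : ℕ} (s : Finset (Fin N)) (σ : Fin N → ℝ) (hσ : ∀ i, σ i = 1 ∨ σ i = -1) :
    PB N {x : Fin N → ℝ | ∀ i ∈ s, x i = σ i}
      = ((N.choose (N / 2) : ℝ≥0∞))⁻¹ *
          ((Finset.univ.filter (fun T : Finset (Fin N) =>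
            T.card = N / 2 ∧ T ∩ s = s.filter (fun i => σ i = 1))).card : ℝ≥0∞) := by
  set A := s.filter (fun i => σ i = 1) with hA
  set E := {x : Fin N → ℝ | ∀ i ∈ s, x i = σ i} with hE
  have hmE := cylinder_measurable s σ
  rw [PB, Measure.smul_apply, smul_eq_mul]
  congr 1
  rw [Measure.finset_sum_apply]
  have key : ∀ T : Finset (Fin N),
      Measure.dirac (fun i => if i ∈ T then (1:ℝ) else -1) E
        = if T ∩ s = A then 1 else 0 := by
    intro T
    rw [Measure.dirac_apply' _ hmE]
    have hmem : (fun i => if i ∈ T then (1:ℝ) else -1) ∈ E ↔ T ∩ s = A := by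
      constructor
      · intro hm
        ext i
        simp only [hA, Finset.mem_inter, Finset.mem_filter]
        constructor
        · rintro ⟨hiT, his⟩
          refine ⟨his, ?_⟩
          have := hm i his
          simp only [if_pos hiT] at this
          exact this.symm
        · rintro ⟨his, hσi⟩
          refine ⟨?_, his⟩
          by_contra hiT
          have := hm i his
          simp only [if_neg hiT] at this
          rw [← this] at hσi
          norm_num at hσi
      · intro hTs i hi
        by_cases hiT : i ∈ T
        · simp only [if_pos hiT]
          have : i ∈ A := hTs ▸ Finset.mem_inter.2 ⟨hiT, hi⟩
          rw [hA] at this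
          exact (Finset.mem_filter.1 this).2.symm
        · simp only [if_neg hiT]
          rcases hσ i with h1' | h1'
          · exfalso
            have : i ∈ A := by rw [hA]; exact Finset.mem_filter.2 ⟨hi, h1'⟩
            rw [← hTs] at this
            exact hiT (Finset.mem_inter.1 this).1
          · exact h1'.symm
    by_cases h : T ∩ s = A
    · rw [if_pos h, Set.indicator_of_mem (hmem.2 h), Pi.one_apply]
    · rw [if_neg h, Set.indicator_of_notMem (fun hc => h (hmem.1 hc))]
  calc ∑ T ∈ Finset.univ.filter (fun T : Finset (Fin N) => T.card = N / 2),
        Measure.dirac (fun i => if i ∈ T then (1:ℝ) else -1) E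
      = ∑ T ∈ Finset.univ.filter (fun T : Finset (Fin N) => T.card = N / 2),
          (if T ∩ s = A then (1:ℝ≥0∞) else 0) := by
        exact Finset.sum_congr rfl (fun T _ => key T)
    _ = ((Finset.univ.filter (fun T : Finset (Fin N) =>
          T.card = N / 2 ∧ T ∩ s = A)).card : ℝ≥0∞) := by
        rw [Finset.sum_boole, ← Finset.filter_filter]

lemma ennreal_final {N m C K a b : ℕ} (hN : 0 < N) (hC : 0 < C)
    (hid : 2^m * C * (a + b) + 2^(m+1) * (N - 1) * K = 2 * (N * C)) :
    (N : ℝ≥0∞)⁻¹ * ((2:ℝ≥0∞)⁻¹ * ((a:ℝ≥0∞) + (b:ℝ≥0∞)))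
      + (((N:ℝ≥0∞) - 1) / N) * ((C:ℝ≥0∞)⁻¹ * K) = (2:ℝ≥0∞)⁻¹ ^ m := by
  rw [show ((N:ℝ≥0∞) - 1) = ((N - 1 : ℕ) : ℝ≥0∞) from by rw [ENNReal.natCast_sub]; norm_num]
  have f1 : (N : ℝ≥0∞)⁻¹ * ((2:ℝ≥0∞)⁻¹ * ((a:ℝ≥0∞) + (b:ℝ≥0∞))) ≠ ⊤ := by
    apply ENNReal.mul_ne_top
    · exact ENNReal.inv_ne_top.2 (by exact_mod_cast hN.ne')
    · exact ENNReal.mul_ne_top (by simp) (by simp)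
  have f2 : (((N - 1 : ℕ):ℝ≥0∞) / N) * ((C:ℝ≥0∞)⁻¹ * K) ≠ ⊤ := by
    apply ENNReal.mul_ne_top
    · exact (ENNReal.div_lt_top (by simp) (by exact_mod_cast hN.ne')).ne
    · exact ENNReal.mul_ne_top (ENNReal.inv_ne_top.2 (by exact_mod_cast hC.ne')) (by simp)
  apply (ENNReal.toReal_eq_toReal_iff' (by exact ENNReal.add_ne_top.2 ⟨f1, f2⟩) (by simp)).1
  rw [ENNReal.toReal_add f1 f2]
  simp only [ENNReal.toReal_mul, ENNReal.toReal_div, ENNReal.toReal_inv, ENNReal.toReal_pow,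
    ENNReal.toReal_natCast, ENNReal.toReal_add (by simp : (a:ℝ≥0∞) ≠ ⊤) (by simp : (b:ℝ≥0∞) ≠ ⊤),
    ENNReal.toReal_ofNat]
  have hidR : (2:ℝ)^m * C * (a + b) + 2^(m+1) * ((N:ℝ)-1) * K = 2*((N:ℝ)*C) := by
    rw [show ((N:ℝ)-1) = ((N-1:ℕ):ℝ) from by rw [Nat.cast_sub hN]; norm_num]
    exact_mod_cast hid
  have hN' : (N:ℝ) ≠ 0 := by exact_mod_cast hN.ne'
  have hC' : (C:ℝ) ≠ 0 := by exact_mod_cast hC.ne'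
  have h2 : (2:ℝ)^m ≠ 0 := by positivity
  have key : ((N:ℝ)⁻¹ * (2⁻¹ * ((a:ℝ)+(b:ℝ))) + ((N-1:ℕ):ℝ)/(N:ℝ) * ((C:ℝ)⁻¹*(K:ℝ))) * (2 * 2^m * (N:ℝ) * (C:ℝ))
      = (2:ℝ)⁻¹^m * (2 * 2^m * N * C) := by
    rw [show ((N-1:ℕ):ℝ) = (N:ℝ)-1 from by rw [Nat.cast_sub hN]; norm_num]
    rw [inv_pow]
    field_simp
    linear_combination hidR
  exact mul_right_cancel₀ (by positivity) key

lemma part1 {N : ℕ} (hN : 0 < N) (hNe : Even N) :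
    IsKWiseRademacher (PMeas N) 3 (fun (i : Fin N) (x : Fin N → ℝ) => x i) := by
  refine ⟨fun i => measurable_pi_apply i, ?_⟩
  intro s hs σ hσ
  have hset : {ω : Fin N → ℝ | ∀ i ∈ s, (fun (i : Fin N) (x : Fin N → ℝ) => x i) i ω = σ i}
      = {x : Fin N → ℝ | ∀ i ∈ s, x i = σ i} := rfl
  rw [hset]
  set A := s.filter (fun i => σ i = 1) with hA
  have hAs : A ⊆ s := Finset.filter_subset _ _
  obtain ⟨n, hn⟩ := hNe
  have hNn : N = 2 * n := by omega
  have hn1 : 1 ≤ n := by omega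
  have hN2 : N / 2 = n := by omega
  have hm3 : s.card ≤ 3 := hs
  have hmN : s.card ≤ 2 * n := by
    have : s.card ≤ N := by simpa using Finset.card_le_univ s
    omega
  have hjm : A.card ≤ s.card := Finset.card_le_card hAs
  have hiff1 : (A = s) ↔ (A.card = s.card) := by
    constructor
    · intro h; rw [h]
    · intro h; exact Finset.eq_of_subset_of_card_le hAs (le_of_eq h.symm)
  have hiff2 : (A = ∅) ↔ (A.card = 0) := by
    rw [Finset.card_eq_zero]
  rw [PMeas, Measure.add_apply, Measure.smul_apply, Measure.smul_apply, smul_eq_mul,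
    smul_eq_mul, PA_apply s σ hσ, PB_apply s σ hσ, ← hA]
  have hcount := count_balanced s A hAs (N / 2)
  rw [hcount]
  rw [show (if A = s then (1:ℝ≥0∞) else 0) = ((if A.card = s.card then 1 else 0 : ℕ) : ℝ≥0∞) by
    by_cases h : A = s
    · rw [if_pos h, if_pos (hiff1.1 h)]; simp
    · rw [if_neg h, if_neg (fun hc => h (hiff1.2 hc))]; simp]
  rw [show (if A = ∅ then (1:ℝ≥0∞) else 0) = ((if A.card = 0 then 1 else 0 : ℕ) : ℝ≥0∞) by
    by_cases h : A = ∅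
    · rw [if_pos h, if_pos (hiff2.1 h)]; simp
    · rw [if_neg h, if_neg (fun hc => h (hiff2.2 hc))]; simp]
  have hC : 0 < N.choose (N / 2) := Nat.choose_pos (by omega)
  apply ennreal_final hN hC
  have hmaster := master (n := n) (m := s.card) (j := A.card) hn1 hm3 hmN hjm
  rw [← hNn, ← hN2] at hmaster
  rw [hmaster, show 4*(N/2) = 2*N from by omega, mul_assoc]



variable {Ω : Type} [MeasurableSpace Ω] {μ : Measure Ω} [IsProbabilityMeasure μ]
  {N : ℕ} {ε : Fin N → Ω → ℝ}

/-- single coordinate distribution -/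
lemma single_apply (hε : IsKWiseRademacher μ 3 ε) (i : Fin N) (c : ℝ) (hc : c = 1 ∨ c = -1) :
    μ {ω | ε i ω = c} = 2⁻¹ := by
  have := hε.2 {i} (by simp) (fun _ => c) (fun _ => hc)
  simpa using this

lemma ae_pm (hε : IsKWiseRademacher μ 3 ε) :
    ∀ᵐ ω ∂μ, ∀ i, ε i ω = 1 ∨ ε i ω = -1 := by
  rw [ae_all_iff]
  intro i
  have hA : MeasurableSet {ω | ε i ω = 1} := (hε.1 i) (measurableSet_singleton 1)
  have hB : MeasurableSet {ω | ε i ω = -1} := (hε.1 i) (measurableSet_singleton (-1))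
  have hU : μ ({ω | ε i ω = 1} ∪ {ω | ε i ω = -1}) = 1 := by
    rw [measure_union ?_ hB, single_apply hε i 1 (Or.inl rfl),
      single_apply hε i (-1) (Or.inr rfl)]
    · exact ENNReal.inv_two_add_inv_two
    · rw [Set.disjoint_left]
      intro ω h1 h2
      simp only [Set.mem_setOf_eq] at h1 h2
      rw [h1] at h2; norm_num at h2
  have : μ ({ω | ε i ω = 1} ∪ {ω | ε i ω = -1})ᶜ = 0 := by
    rw [measure_compl (hA.union hB) (measure_ne_top μ _), hU, measure_univ, tsub_self]
  filter_upwards [measure_eq_zero_iff_ae_notMem.1 this] with ω hω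
  have hω' := Set.not_notMem.1 hω
  simp only [Set.mem_union, Set.mem_setOf_eq] at hω'
  exact hω'

/-- pair distribution -/
lemma pair_apply (hε : IsKWiseRademacher μ 3 ε) {i j : Fin N} (hij : i ≠ j)
    (c d : ℝ) (hc : c = 1 ∨ c = -1) (hd : d = 1 ∨ d = -1) :
    μ {ω | ε i ω = c ∧ ε j ω = d} = 4⁻¹ := by
  set σ : Fin N → ℝ := fun k => if k = i then c else if k = j then d else 1 with hσ
  have hσv : ∀ k, σ k = 1 ∨ σ k = -1 := by
    intro k
    simp only [hσ]
    split_ifs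
    · exact hc
    · exact hd
    · exact Or.inl rfl
  have hcard : ({i, j} : Finset (Fin N)).card = 2 := by
    rw [Finset.card_insert_of_notMem (by simpa using hij), Finset.card_singleton]
  have := hε.2 {i, j} (by rw [hcard]; norm_num) σ hσv
  rw [hcard] at this
  have hset : {ω | ∀ k ∈ ({i, j} : Finset (Fin N)), ε k ω = σ k} = {ω | ε i ω = c ∧ ε j ω = d} := by
    ext ω
    simp only [Finset.mem_insert, Finset.mem_singleton, Set.mem_setOf_eq, hσ]
    constructor
    · intro h
      refine ⟨?_, ?_⟩
      · have := h i (Or.inl rfl); simpa using this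
      · have := h j (Or.inr rfl)
        rw [if_neg hij.symm, if_pos rfl] at this
        exact this
    · rintro ⟨h1, h2⟩ k hk
      rcases hk with rfl | rfl
      · simpa using h1
      · rw [if_neg hij.symm, if_pos rfl]
        exact h2
  rw [hset] at this
  rw [this]
  rw [show (4:ℝ≥0∞)⁻¹ = 2⁻¹^2 from by rw [← ENNReal.inv_pow]; norm_num]

/-- expectation of product of two distinct coordinates is zero -/
lemma int_pair (hε : IsKWiseRademacher μ 3 ε) {i j : Fin N} (hij : i ≠ j) :
    ∫ ω, ε i ω * ε j ω ∂μ = 0 := by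
  set U : Set Ω := {ω | ε i ω = 1 ∧ ε j ω = 1} ∪ {ω | ε i ω = -1 ∧ ε j ω = -1} with hU
  have hmi := hε.1 i
  have hmj := hε.1 j
  have hU1m : MeasurableSet {ω | ε i ω = 1 ∧ ε j ω = 1} := by
    exact (hmi (measurableSet_singleton 1)).inter (hmj (measurableSet_singleton 1))
  have hU2m : MeasurableSet {ω | ε i ω = -1 ∧ ε j ω = -1} := by
    exact (hmi (measurableSet_singleton (-1))).inter (hmj (measurableSet_singleton (-1)))
  have hUm : MeasurableSet U := hU1m.union hU2m
  have hUmeas : μ U = 2⁻¹ := by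
    rw [hU, measure_union ?_ hU2m, pair_apply hε hij 1 1 (Or.inl rfl) (Or.inl rfl),
      pair_apply hε hij (-1) (-1) (Or.inr rfl) (Or.inr rfl)]
    · calc (4:ℝ≥0∞)⁻¹ + 4⁻¹ = 2*4⁻¹ := (two_mul _).symm
        _ = 2⁻¹ := by
          rw [show (4:ℝ≥0∞) = 2*2 from by norm_num,
            ENNReal.mul_inv (by norm_num) (by norm_num), ← mul_assoc,
            ENNReal.mul_inv_cancel (by norm_num) (by norm_num), one_mul]
    · rw [Set.disjoint_left]
      rintro ω ⟨h1, _⟩ ⟨h2, _⟩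
      rw [h1] at h2; norm_num at h2
  have hae : (fun ω => ε i ω * ε j ω) =ᵐ[μ] (fun ω => 2 * U.indicator (fun _ => (1:ℝ)) ω - 1) := by
    filter_upwards [ae_pm hε] with ω hω
    rcases hω i with h1 | h1 <;> rcases hω j with h2 | h2
    · have hmem : ω ∈ U := Or.inl ⟨h1, h2⟩
      rw [h1, h2, Set.indicator_of_mem hmem]
      norm_num
    · have hmem : ω ∉ U := by
        rintro (⟨_, hx⟩ | ⟨hx, _⟩)
        · rw [h2] at hx; norm_num at hx
        · rw [h1] at hx; norm_num at hx
      rw [h1, h2, Set.indicator_of_notMem hmem]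
      norm_num
    · have hmem : ω ∉ U := by
        rintro (⟨hx, _⟩ | ⟨_, hx⟩)
        · rw [h1] at hx; norm_num at hx
        · rw [h2] at hx; norm_num at hx
      rw [h1, h2, Set.indicator_of_notMem hmem]
      norm_num
    · have hmem : ω ∈ U := Or.inr ⟨h1, h2⟩
      rw [h1, h2, Set.indicator_of_mem hmem]
      norm_num
  rw [integral_congr_ae hae]
  have hint : Integrable (U.indicator (fun _ => (1:ℝ))) μ := by
    apply (integrable_const (1:ℝ)).indicator hUm
  rw [integral_sub (hint.const_mul 2) (integrable_const 1)]
  rw [integral_const_mul, integral_indicator hUm]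
  simp [measureReal_def, hUmeas, ENNReal.toReal_inv]

lemma integrable_eps_mul (hε : IsKWiseRademacher μ 3 ε) (i j : Fin N) :
    Integrable (fun ω => ε i ω * ε j ω) μ := by
  refine ⟨((hε.1 i).mul (hε.1 j)).aestronglyMeasurable, ?_⟩
  apply HasFiniteIntegral.of_bounded (C := 1)
  filter_upwards [ae_pm hε] with ω hω
  rw [Real.norm_eq_abs, abs_mul]
  rcases hω i with h1 | h1 <;> rcases hω j with h2 | h2 <;> rw [h1, h2] <;> norm_num

lemma int_eps_sq (hε : IsKWiseRademacher μ 3 ε) (i : Fin N) :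
    ∫ ω, ε i ω * ε i ω ∂μ = 1 := by
  have : (fun ω => ε i ω * ε i ω) =ᵐ[μ] (fun _ => (1:ℝ)) := by
    filter_upwards [ae_pm hε] with ω hω
    rcases hω i with h1 | h1 <;> rw [h1] <;> norm_num
  rw [integral_congr_ae this, integral_const]
  simp

lemma int_sq (hε : IsKWiseRademacher μ 3 ε) (a : Fin N → ℝ) (ha : ∑ i, (a i)^2 = 1) :
    ∫ ω, (∑ i, a i * ε i ω)^2 ∂μ = 1 := by
  have expand : ∀ ω, (∑ i, a i * ε i ω)^2 = ∑ i, ∑ j, (a i * a j) * (ε i ω * ε j ω) := by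
    intro ω
    rw [sq, Finset.sum_mul_sum]
    exact Finset.sum_congr rfl fun i _ => Finset.sum_congr rfl fun j _ => by ring
  simp_rw [expand]
  rw [integral_finset_sum _ (fun i _ => ?_)]
  · have : ∀ i : Fin N, ∫ ω, (∑ j, (a i * a j) * (ε i ω * ε j ω)) ∂μ = (a i)^2 := by
      intro i
      rw [integral_finset_sum _ (fun j _ => ((integrable_eps_mul hε i j).const_mul _))]
      have : ∀ j : Fin N, ∫ ω, (a i * a j) * (ε i ω * ε j ω) ∂μ
          = if j = i then (a i)^2 else 0 := by
        intro j
        rw [integral_const_mul]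
        by_cases h : j = i
        · subst h
          rw [if_pos rfl, int_eps_sq hε j]
          ring
        · rw [if_neg h, int_pair hε (fun hc => h hc.symm), mul_zero]
      rw [Finset.sum_congr rfl (fun j _ => this j), Finset.sum_ite_eq' Finset.univ i
        (fun _ => (a i)^2), if_pos (Finset.mem_univ i)]
    rw [Finset.sum_congr rfl (fun i _ => this i), ha]
  · exact integrable_finset_sum _ (fun j _ => ((integrable_eps_mul hε i j).const_mul _))

lemma khintchine_ub (hε : IsKWiseRademacher μ 3 ε) (a : Fin N → ℝ)
    (ha : ∑ i, (a i)^2 = 1) {p : ℝ} (hp : 2 ≤ p) :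
    (∫ ω, |∑ i, a i * ε i ω| ^ p ∂μ) ^ (1/p) ≤ (N:ℝ) ^ ((1:ℝ)/2 - 1/p) := by
  have hp0 : (0:ℝ) < p := by linarith
  set S := fun ω => ∑ i, a i * ε i ω with hS
  have hSm : Measurable S :=
    Finset.measurable_sum _ (fun i _ => (hε.1 i).const_mul (a i))
  have haesq : ∀ᵐ ω ∂μ, |S ω| ≤ Real.sqrt N := by
    filter_upwards [ae_pm hε] with ω hω
    have h1 : |S ω| ≤ ∑ i, |a i| := by
      refine (Finset.abs_sum_le_sum_abs _ _).trans (le_of_eq ?_)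
      refine Finset.sum_congr rfl fun i _ => ?_
      rw [abs_mul]
      rcases hω i with h | h <;> rw [h] <;> simp
    refine h1.trans ?_
    rw [Real.le_sqrt (Finset.sum_nonneg fun i _ => abs_nonneg _) (Nat.cast_nonneg N)]
    calc (∑ i, |a i|)^2 ≤ (Finset.univ.card : ℝ) * ∑ i, |a i|^2 := sq_sum_le_card_mul_sum_sq
      _ = N := by
        simp only [Finset.card_univ, Fintype.card_fin, sq_abs]
        rw [ha, mul_one]
  have hint2 : Integrable (fun ω => S ω^2) μ := by
    refine ⟨(hSm.pow_const 2).aestronglyMeasurable, ?_⟩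
    apply HasFiniteIntegral.of_bounded (C := (N:ℝ))
    filter_upwards [haesq] with ω hω
    rw [Real.norm_eq_abs, abs_pow]
    calc |S ω|^2 ≤ (Real.sqrt N)^2 := pow_le_pow_left₀ (abs_nonneg _) hω 2
      _ = N := Real.sq_sqrt (Nat.cast_nonneg N)
  have hintp : Integrable (fun ω => |S ω|^p) μ := by
    refine ⟨((Real.continuous_rpow_const hp0.le).measurable.comp hSm.abs).aestronglyMeasurable, ?_⟩
    apply HasFiniteIntegral.of_bounded (C := Real.sqrt N ^ p)
    filter_upwards [haesq] with ω hω
    rw [Real.norm_eq_abs, abs_of_nonneg (Real.rpow_nonneg (abs_nonneg _) p)]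
    exact Real.rpow_le_rpow (abs_nonneg _) hω hp0.le
  have hmono : ∀ᵐ ω ∂μ, |S ω|^p ≤ (N:ℝ)^((p-2)/2) * S ω^2 := by
    filter_upwards [haesq] with ω hω
    have hq : (Real.sqrt N)^(p-2) = (N:ℝ)^((p-2)/2) := by
      rw [Real.sqrt_eq_rpow, ← Real.rpow_mul (Nat.cast_nonneg N)]
      congr 1
      ring
    rcases eq_or_lt_of_le (abs_nonneg (S ω)) with h0 | h0
    · rw [← h0, Real.zero_rpow hp0.ne']
      positivity
    · have heq : |S ω|^p = |S ω|^(p-2) * |S ω|^(2:ℝ) := by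
        rw [← Real.rpow_add h0]
        congr 1
        ring
      have h2 : |S ω|^(2:ℝ) = S ω^2 := by
        rw [show (2:ℝ) = ((2:ℕ):ℝ) from by norm_num, Real.rpow_natCast, sq_abs]
      rw [heq, h2]
      apply mul_le_mul_of_nonneg_right _ (sq_nonneg _)
      rw [← hq]
      exact Real.rpow_le_rpow (abs_nonneg _) hω (by linarith)
  have key := integral_mono_ae hintp (hint2.const_mul ((N:ℝ)^((p-2)/2))) hmono
  rw [integral_const_mul, int_sq hε a ha, mul_one] at key
  have hnn : 0 ≤ ∫ ω, |S ω|^p ∂μ := integral_nonneg fun ω => Real.rpow_nonneg (abs_nonneg _) p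
  calc (∫ ω, |S ω|^p ∂μ)^(1/p) ≤ ((N:ℝ)^((p-2)/2))^(1/p) :=
        Real.rpow_le_rpow hnn key (by positivity)
    _ = (N:ℝ)^((1:ℝ)/2 - 1/p) := by
        rw [← Real.rpow_mul (Nat.cast_nonneg N)]
        congr 1
        field_simp

lemma choose_ne_zero {N : ℕ} : (N.choose (N/2) : ℝ≥0∞) ≠ 0 := by
  exact_mod_cast (Nat.choose_pos (Nat.div_le_self N 2)).ne'

lemma filter_card_eq {N : ℕ} :
    (Finset.univ.filter (fun T : Finset (Fin N) => T.card = N / 2)) =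
      Finset.powersetCard (N/2) Finset.univ := by
  rw [Finset.powersetCard_eq_filter, Finset.powerset_univ]

lemma PMeas_prob {N : ℕ} (hN : 0 < N) : IsProbabilityMeasure (PMeas N) := by
  constructor
  rw [PMeas, Measure.add_apply, Measure.smul_apply, Measure.smul_apply, smul_eq_mul, smul_eq_mul]
  have hPA : PA N Set.univ = 1 := by
    rw [PA, Measure.smul_apply, Measure.add_apply, Measure.dirac_apply_of_mem (Set.mem_univ _),
      Measure.dirac_apply_of_mem (Set.mem_univ _), smul_eq_mul, one_add_one_eq_two]
    exact ENNReal.inv_mul_cancel (by norm_num) (by norm_num)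
  have hPB : PB N Set.univ = 1 := by
    rw [PB, Measure.smul_apply, smul_eq_mul, Measure.finset_sum_apply]
    have : ∀ T ∈ Finset.univ.filter (fun T : Finset (Fin N) => T.card = N / 2),
        Measure.dirac (fun i => if i ∈ T then (1:ℝ) else -1) Set.univ = 1 := by
      intro T _
      rw [Measure.dirac_apply_of_mem (Set.mem_univ _)]
    rw [Finset.sum_congr rfl this, Finset.sum_const, nsmul_eq_mul, mul_one, filter_card_eq,
      Finset.card_powersetCard, Finset.card_univ, Fintype.card_fin]
    exact ENNReal.inv_mul_cancel choose_ne_zero (natCast_ne_top _)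
  rw [hPA, hPB, mul_one, mul_one]
  rw [show ((N:ℝ≥0∞) - 1) = ((N-1:ℕ):ℝ≥0∞) from by rw [ENNReal.natCast_sub]; norm_num,
    ← one_div, ENNReal.div_add_div_same,
    show (1:ℝ≥0∞) + ((N-1:ℕ):ℝ≥0∞) = ((1 + (N-1) : ℕ):ℝ≥0∞) from by push_cast; ring,
    show 1 + (N-1) = N from by omega]
  exact ENNReal.div_self (by exact_mod_cast hN.ne') (natCast_ne_top _)

lemma witness_val {N : ℕ} (hN : 0 < N) (hNe : Even N) {p : ℝ} (hp : 2 ≤ p) :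
    (∫ x : Fin N → ℝ, |∑ i, (Real.sqrt N)⁻¹ * x i| ^ p ∂(PMeas N)) ^ (1/p)
      = (N:ℝ) ^ ((1:ℝ)/2 - 1/p) := by
  have hp0 : (0:ℝ) < p := by linarith
  have hN0 : (0:ℝ) < (N:ℝ) := by exact_mod_cast hN
  have hsq : Real.sqrt N * Real.sqrt N = (N:ℝ) := Real.mul_self_sqrt hN0.le
  have hsq0 : (0:ℝ) < Real.sqrt N := Real.sqrt_pos.2 hN0
  set f : (Fin N → ℝ) → ℝ := fun x => |∑ i, (Real.sqrt N)⁻¹ * x i| ^ p with hf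
  have hfm : Measurable f := by
    apply (Real.continuous_rpow_const hp0.le).measurable.comp
    exact (Finset.measurable_sum _ (fun i _ => (measurable_pi_apply i).const_mul _)).abs
  have hdint : ∀ z : Fin N → ℝ, Integrable f (Measure.dirac z) := fun z =>
    (integrable_const (f z)).congr (ae_eq_dirac' hfm).symm
  have hIA : Integrable f (PA N) := by
    rw [PA]
    exact ((hdint _).add_measure (hdint _)).smul_measure (by simp)
  have hIB : Integrable f (PB N) := by
    rw [PB]
    exact (integrable_finset_sum_measure.2 (fun T _ => hdint _)).smul_measure
      (ENNReal.inv_ne_top.2 choose_ne_zero)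
  -- value at constant one vector
  have hval1 : ∀ c : ℝ, (c = 1 ∨ c = -1) → f (fun _ => c) = (N:ℝ) ^ (p/2) := by
    intro c hc
    have : (∑ i : Fin N, (Real.sqrt N)⁻¹ * c) = (N:ℝ) * ((Real.sqrt N)⁻¹ * c) := by
      rw [Finset.sum_const, Finset.card_univ, Fintype.card_fin, nsmul_eq_mul]
    rw [hf]
    simp only [this]
    have habs : |(N:ℝ) * ((Real.sqrt N)⁻¹ * c)| = Real.sqrt N := by
      rcases hc with rfl | rfl
      · rw [abs_of_nonneg (by positivity)]
        field_simp
        rw [Real.sq_sqrt hN0.le]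
      · rw [show (N:ℝ) * ((Real.sqrt N)⁻¹ * (-1)) = -((N:ℝ) * (Real.sqrt N)⁻¹) from by ring,
          abs_neg, abs_of_nonneg (by positivity)]
        field_simp
        rw [Real.sq_sqrt hN0.le]
    rw [habs, Real.sqrt_eq_rpow, ← Real.rpow_mul hN0.le]
    congr 1
    ring
  -- value at balanced vectors
  obtain ⟨n2, hn2⟩ := hNe
  have hval0 : ∀ T : Finset (Fin N), T.card = N/2 → f (fun i => if i ∈ T then (1:ℝ) else -1) = 0 := by
    intro T hT
    have hsum : (∑ i : Fin N, (if i ∈ T then (1:ℝ) else -1)) = 0 := by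
      rw [Finset.sum_ite, Finset.sum_const, Finset.sum_const]
      have h1 : (Finset.univ.filter (fun i => i ∈ T)) = T := by
        ext i; simp
      have h2 : (Finset.univ.filter (fun i => i ∉ T)) = Tᶜ := by
        ext i; simp
      rw [h1, h2, Finset.card_compl, Fintype.card_fin, hT]
      have : N - N/2 = N/2 := by omega
      rw [this]
      simp
    rw [hf]
    simp only [← Finset.mul_sum]
    rw [hsum, mul_zero, abs_zero, Real.zero_rpow hp0.ne']
  have hintPA : ∫ x, f x ∂(PA N) = (N:ℝ) ^ (p/2) := by
    rw [PA, integral_smul_measure, integral_add_measure (hdint _) (hdint _),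
      integral_dirac' _ _ hfm.stronglyMeasurable, integral_dirac' _ _ hfm.stronglyMeasurable,
      hval1 1 (Or.inl rfl), hval1 (-1) (Or.inr rfl)]
    rw [ENNReal.toReal_inv]
    norm_num
    ring
  have hintPB : ∫ x, f x ∂(PB N) = 0 := by
    rw [PB, integral_smul_measure, MeasureTheory.integral_finset_sum_measure (fun T _ => hdint _)]
    have : ∀ T ∈ Finset.univ.filter (fun T : Finset (Fin N) => T.card = N / 2),
        ∫ x, f x ∂(Measure.dirac (fun i => if i ∈ T then (1:ℝ) else -1)) = 0 := by
      intro T hT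
      rw [integral_dirac' _ _ hfm.stronglyMeasurable]
      exact hval0 T (by simpa using hT)
    rw [Finset.sum_congr rfl this, Finset.sum_const, smul_zero, smul_zero]
  have htotal : ∫ x, f x ∂(PMeas N) = (N:ℝ) ^ (p/2 - 1) := by
    rw [PMeas, integral_add_measure
      (hIA.smul_measure (ENNReal.inv_ne_top.2 (Nat.cast_ne_zero.mpr hN.ne'))) ?hB]
    case hB =>
      apply hIB.smul_measure
      exact (ENNReal.div_lt_top (by simp) (Nat.cast_ne_zero.mpr hN.ne')).ne
    rw [integral_smul_measure, integral_smul_measure, hintPA, hintPB, smul_zero, add_zero,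
      ENNReal.toReal_inv, ENNReal.toReal_natCast, smul_eq_mul]
    rw [Real.rpow_sub hN0, Real.rpow_one]
    field_simp
  rw [htotal, ← Real.rpow_mul hN0.le]
  congr 1
  field_simp

end Aux

/-- the measure `P = (1/N)P_a + ((N-1)/N)P_b` is 3-wise independent
(every three distinct coordinates are jointly uniform on `{−1,1}³`); consequently
`C(N,p,3) = N^{1/2-1/p}` for `N` even and `p ≥ 2`. -/
theorem PMeas_threewise_and_CNp3 {N : ℕ} (hN : 0 < N) (hNe : Even N) :
    IsKWiseRademacher (PMeas N) 3 (fun (i : Fin N) (x : Fin N → ℝ) => x i) ∧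
    ∀ p : ℝ, 2 ≤ p → CNpk N p 3 = (N : ℝ) ^ ((1 : ℝ) / 2 - 1 / p) := by
  constructor
  · exact part1 hN hNe
  · intro p hp
    have hprob := PMeas_prob (N := N) hN
    set b := (N:ℝ) ^ ((1:ℝ)/2 - 1/p) with hb
    set Sset := {x : ℝ | ∃ (Ω : Type) (_ : MeasurableSpace Ω) (μ : Measure Ω),
      IsProbabilityMeasure μ ∧ ∃ (ε : Fin N → Ω → ℝ) (a : Fin N → ℝ),
        IsKWiseRademacher μ 3 ε ∧ (∑ i, (a i) ^ 2 = 1) ∧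
        x = (∫ ω, |∑ i, a i * ε i ω| ^ p ∂μ) ^ (1 / p)} with hSset
    have hub : ∀ x ∈ Sset, x ≤ b := by
      rintro x ⟨Ω, mΩ, μ, hpm, ε, a, hε, ha, rfl⟩
      haveI := hpm
      exact khintchine_ub hε a ha hp
    have hmem : b ∈ Sset := by
      refine ⟨Fin N → ℝ, inferInstance, PMeas N, hprob, (fun (i : Fin N) (x : Fin N → ℝ) => x i),
        (fun _ => (Real.sqrt N)⁻¹), part1 hN hNe, ?_, ?_⟩
      · rw [Finset.sum_const, Finset.card_univ, Fintype.card_fin, nsmul_eq_mul]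
        rw [inv_pow, Real.sq_sqrt (Nat.cast_nonneg N)]
        exact mul_inv_cancel₀ (by exact_mod_cast hN.ne')
      · exact (witness_val hN hNe hp).symm
    rw [CNpk]
    exact le_antisymm (csSup_le ⟨b, hmem⟩ hub) (le_csSup ⟨b, hub⟩ hmem)
end
end
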